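/- arXiv:1810.03233 — 2 statements merged into one kernel-verified Lean document; each statement's English description precedes it below -/
import Mathlib

section
/- Second moment of the random-directions (RDSA) gradient estimate: let f : ℝ^d → ℝ be differentiable with L-Lipschitz gradient, let c > 0, and let μ be a Borel probability measure on ℝ^d such that ∫ ‖⟨g, z⟩·z‖² dμ(z) ≤ s·‖g‖² for every g ∈ ℝ^d (for some s > 0) and M := ∫ ‖z‖⁶ dμ(z) < ∞. Then for every x ∈ ℝ^d, ∫ ‖((f(x + c·z) − f(x))/c)·z‖² dμ(z) ≤ 2s·‖∇f(x)‖² + (c²L²/2)·M. -/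
set_option maxHeartbeats 800000


open MeasureTheory
open scoped RealInnerProductSpace

lemma rdsa_taylor_aux {d : ℕ}
    (f : EuclideanSpace ℝ (Fin d) → ℝ)
    (hfdiff : Differentiable ℝ f)
    (L : ℝ) (hL : 0 < L)
    (hflip : ∀ u w, ‖gradient f u - gradient f w‖ ≤ L * ‖u - w‖)
    (x v : EuclideanSpace ℝ (Fin d)) :
    |f (x + v) - f x - ⟪gradient f x, v⟫| ≤ L / 2 * ‖v‖ ^ 2 := by
  have hgradcont : Continuous fun u => gradient f u := by
    have : LipschitzWith (Real.toNNReal L) (fun u => gradient f u) := by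
      apply LipschitzWith.of_dist_le_mul
      intro u w
      simp only [dist_eq_norm]
      calc ‖gradient f u - gradient f w‖ ≤ L * ‖u - w‖ := hflip u w
        _ = Real.toNNReal L * ‖u - w‖ := by
            rw [Real.coe_toNNReal L hL.le]
    exact this.continuous
  have hderiv : ∀ t : ℝ, HasDerivAt (fun t : ℝ => f (x + t • v))
      ⟪gradient f (x + t • v), v⟫ t := by
    intro t
    have hline : HasDerivAt (fun t : ℝ => x + t • v) v t := by
      simpa using ((hasDerivAt_id t).smul_const v).const_add x
    have hf' : HasFDerivAt f (InnerProductSpace.toDual ℝ _ (gradient f (x + t • v)))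
        (x + t • v) := (hfdiff _).hasGradientAt.hasFDerivAt
    exact hf'.comp_hasDerivAt t hline
  have hcont : Continuous fun t : ℝ => (⟪gradient f (x + t • v), v⟫ : ℝ) := by
    apply Continuous.inner
    · exact hgradcont.comp (by continuity)
    · exact continuous_const
  have hFTC := intervalIntegral.integral_eq_sub_of_hasDerivAt
    (fun t (_ : t ∈ Set.uIcc (0:ℝ) 1) => hderiv t) (hcont.intervalIntegrable 0 1)
  simp only [one_smul, zero_smul, add_zero] at hFTC
  have key : f (x + v) - f x - ⟪gradient f x, v⟫
      = ∫ t in (0:ℝ)..1, ((⟪gradient f (x + t • v), v⟫ : ℝ) - ⟪gradient f x, v⟫) := by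
    rw [intervalIntegral.integral_sub (hcont.intervalIntegrable 0 1)
      intervalIntegrable_const, ← hFTC]
    simp
  rw [key]
  have hbound : ∀ t ∈ Set.uIoc (0:ℝ) 1,
      ‖(⟪gradient f (x + t • v), v⟫ : ℝ) - ⟪gradient f x, v⟫‖ ≤ L * t * ‖v‖ ^ 2 := by
    intro t ht
    rw [Set.uIoc_of_le (by norm_num)] at ht
    have h1 : (⟪gradient f (x + t • v), v⟫ : ℝ) - ⟪gradient f x, v⟫
        = ⟪gradient f (x + t • v) - gradient f x, v⟫ := by
      rw [inner_sub_left]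
    rw [h1]
    calc ‖(⟪gradient f (x + t • v) - gradient f x, v⟫ : ℝ)‖
        ≤ ‖gradient f (x + t • v) - gradient f x‖ * ‖v‖ := norm_inner_le_norm _ _
      _ ≤ (L * ‖(x + t • v) - x‖) * ‖v‖ := by
          gcongr; exact hflip _ _
      _ = L * (|t| * ‖v‖) * ‖v‖ := by
          simp [norm_smul, Real.norm_eq_abs]
      _ = L * t * ‖v‖ ^ 2 := by
          rw [abs_of_nonneg ht.1.le]; ring
  have hint : IntervalIntegrable (fun t : ℝ => L * t * ‖v‖ ^ 2) MeasureTheory.volume 0 1 :=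
    (by continuity : Continuous fun t : ℝ => L * t * ‖v‖ ^ 2).intervalIntegrable 0 1
  have hmain := intervalIntegral.norm_integral_le_abs_of_norm_le
    (f := fun t : ℝ => (⟪gradient f (x + t • v), v⟫ : ℝ) - ⟪gradient f x, v⟫)
    (g := fun t : ℝ => L * t * ‖v‖ ^ 2)
    (MeasureTheory.ae_restrict_of_forall_mem measurableSet_uIoc hbound) hint
  have hval : (∫ t in (0:ℝ)..1, L * t * ‖v‖ ^ 2) = L / 2 * ‖v‖ ^ 2 := by
    have : (fun t : ℝ => L * t * ‖v‖ ^ 2) = fun t : ℝ => t * (L * ‖v‖ ^ 2) := by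
      funext t; ring
    rw [this, intervalIntegral.integral_mul_const, integral_id]
    ring
  rw [Real.norm_eq_abs, hval] at hmain
  simpa [abs_of_nonneg (by positivity : (0:ℝ) ≤ L / 2 * ‖v‖ ^ 2)] using hmain

theorem rdsa_second_moment
    (d : ℕ) (hd : 1 ≤ d)
    (f : EuclideanSpace ℝ (Fin d) → ℝ)
    (hfdiff : Differentiable ℝ f)
    (L : ℝ) (hL : 0 < L)
    (hflip : ∀ u w, ‖gradient f u - gradient f w‖ ≤ L * ‖u - w‖)
    (c : ℝ) (hc : 0 < c)
    (μ : Measure (EuclideanSpace ℝ (Fin d))) [IsProbabilityMeasure μ]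
    (s : ℝ) (hs : 0 < s)
    (hsbound : ∀ g : EuclideanSpace ℝ (Fin d),
      (∫ z, ‖(⟪g, z⟫ : ℝ) • z‖ ^ 2 ∂μ) ≤ s * ‖g‖ ^ 2)
    (M : ℝ) (hM6 : Integrable (fun z : EuclideanSpace ℝ (Fin d) => ‖z‖ ^ 6) μ)
    (hM : M = ∫ z, ‖z‖ ^ 6 ∂μ)
    (x : EuclideanSpace ℝ (Fin d)) :
    (∫ z, ‖((f (x + c • z) - f x) / c) • z‖ ^ 2 ∂μ) ≤
      2 * s * ‖gradient f x‖ ^ 2 + (c ^ 2 * L ^ 2 / 2) * M := by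
  set g := gradient f x with hg
  -- pointwise bound
  have hpt : ∀ z : EuclideanSpace ℝ (Fin d),
      ‖((f (x + c • z) - f x) / c) • z‖ ^ 2 ≤
        2 * ‖(⟪g, z⟫ : ℝ) • z‖ ^ 2 + (c ^ 2 * L ^ 2 / 2) * ‖z‖ ^ 6 := by
    intro z
    have htay := rdsa_taylor_aux f hfdiff L hL hflip x (c • z)
    rw [real_inner_smul_right, norm_smul, Real.norm_eq_abs, abs_of_nonneg hc.le,
      mul_pow] at htay
    set a : ℝ := ⟪g, z⟫ with ha
    set b : ℝ := (f (x + c • z) - f x) / c with hb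
    have hba : |b - a| ≤ L * c / 2 * ‖z‖ ^ 2 := by
      have hcb : c * b = f (x + c • z) - f x := by
        rw [hb]; field_simp [hc.ne']
      have : |c * b - c * a| ≤ L / 2 * (c ^ 2 * ‖z‖ ^ 2) := by
        rw [hcb]; exact htay
      rw [← mul_sub, abs_mul, abs_of_nonneg hc.le] at this
      rw [show L * c / 2 * ‖z‖ ^ 2 = (L / 2 * (c ^ 2 * ‖z‖ ^ 2)) / c by
        field_simp]
      rw [le_div_iff₀ hc, mul_comm]
      exact this
    have hr2 : (b - a) ^ 2 ≤ (L * c / 2 * ‖z‖ ^ 2) ^ 2 :=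
      sq_le_sq' (neg_le_of_abs_le hba) (le_of_abs_le hba)
    have hbz : ‖b • z‖ ^ 2 = b ^ 2 * ‖z‖ ^ 2 := by
      rw [norm_smul, mul_pow, Real.norm_eq_abs, sq_abs]
    have haz : ‖a • z‖ ^ 2 = a ^ 2 * ‖z‖ ^ 2 := by
      rw [norm_smul, mul_pow, Real.norm_eq_abs, sq_abs]
    rw [hbz, haz]
    have h5 : b ^ 2 ≤ 2 * a ^ 2 + 2 * (b - a) ^ 2 := by nlinarith [sq_nonneg (a - (b - a))]
    calc b ^ 2 * ‖z‖ ^ 2 ≤ (2 * a ^ 2 + 2 * (b - a) ^ 2) * ‖z‖ ^ 2 :=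
          mul_le_mul_of_nonneg_right h5 (sq_nonneg ‖z‖)
      _ ≤ (2 * a ^ 2 + 2 * (L * c / 2 * ‖z‖ ^ 2) ^ 2) * ‖z‖ ^ 2 := by
          have := mul_le_mul_of_nonneg_right hr2 (sq_nonneg ‖z‖)
          nlinarith [this]
      _ = 2 * (a ^ 2 * ‖z‖ ^ 2) + c ^ 2 * L ^ 2 / 2 * ‖z‖ ^ 6 := by ring
  -- integrability
  have hI1 : Integrable (fun z : EuclideanSpace ℝ (Fin d) => ‖(⟪g, z⟫ : ℝ) • z‖ ^ 2) μ := by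
    apply Integrable.mono' (g := fun z => ‖g‖ ^ 2 * (1 + ‖z‖ ^ 6))
      (((integrable_const (1:ℝ)).add hM6).const_mul _)
    · apply Continuous.aestronglyMeasurable
      fun_prop
    · apply Filter.Eventually.of_forall
      intro z
      rw [Real.norm_eq_abs, abs_of_nonneg (by positivity)]
      have h1 : ‖(⟪g, z⟫ : ℝ) • z‖ ^ 2 = |(⟪g, z⟫ : ℝ)| ^ 2 * ‖z‖ ^ 2 := by
        rw [norm_smul, mul_pow, Real.norm_eq_abs]
      rw [h1]
      have h2 : |(⟪g, z⟫ : ℝ)| ≤ ‖g‖ * ‖z‖ := by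
        rw [← Real.norm_eq_abs]; exact norm_inner_le_norm _ _
      have h3 : |(⟪g, z⟫ : ℝ)| ^ 2 * ‖z‖ ^ 2 ≤ (‖g‖ * ‖z‖) ^ 2 * ‖z‖ ^ 2 :=
        mul_le_mul_of_nonneg_right (pow_le_pow_left₀ (abs_nonneg _) h2 2) (sq_nonneg ‖z‖)
      refine h3.trans ?_
      have h4 : ‖z‖ ^ 4 ≤ 1 + ‖z‖ ^ 6 := by
        nlinarith [sq_nonneg (‖z‖ ^ 3 - ‖z‖), sq_nonneg (‖z‖ ^ 2 - 1), sq_nonneg ‖z‖,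
          sq_nonneg (‖z‖ ^ 2)]
      have h6 : (‖g‖ * ‖z‖) ^ 2 * ‖z‖ ^ 2 = ‖g‖ ^ 2 * ‖z‖ ^ 4 := by ring
      rw [h6]
      exact mul_le_mul_of_nonneg_left h4 (sq_nonneg ‖g‖)
  have hI2 : Integrable (fun z : EuclideanSpace ℝ (Fin d) =>
      2 * ‖(⟪g, z⟫ : ℝ) • z‖ ^ 2 + (c ^ 2 * L ^ 2 / 2) * ‖z‖ ^ 6) μ :=
    (hI1.const_mul 2).add (hM6.const_mul _)
  calc (∫ z, ‖((f (x + c • z) - f x) / c) • z‖ ^ 2 ∂μ)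
      ≤ ∫ z, (2 * ‖(⟪g, z⟫ : ℝ) • z‖ ^ 2 + (c ^ 2 * L ^ 2 / 2) * ‖z‖ ^ 6) ∂μ := by
        apply integral_mono_of_nonneg
        · exact Filter.Eventually.of_forall fun z => by positivity
        · exact hI2
        · exact Filter.Eventually.of_forall hpt
    _ = 2 * (∫ z, ‖(⟪g, z⟫ : ℝ) • z‖ ^ 2 ∂μ) + (c ^ 2 * L ^ 2 / 2) * M := by
        rw [integral_add (hI1.const_mul 2) (hM6.const_mul _),
          integral_const_mul, integral_const_mul, hM]
    _ ≤ 2 * (s * ‖g‖ ^ 2) + (c ^ 2 * L ^ 2 / 2) * M := by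
        gcongr
        exact hsbound g
    _ = 2 * s * ‖g‖ ^ 2 + (c ^ 2 * L ^ 2 / 2) * M := by ring
end

section
/- Single-step descent with Frank–Wolfe gap for (possibly non-convex) smooth functions: let f : ℝ^d → ℝ be differentiable with L-Lipschitz gradient, let x ∈ C, d ∈ ℝ^d, γ ∈ [0, 1], let v ∈ C satisfy ⟨d, v⟩ ≤ ⟨d, s⟩ for all s ∈ C, and set x⁺ = (1 − γ)x + γv. Then f(x⁺) ≤ f(x) − γ·𝒢(x) + γR·‖∇f(x) − d‖ + LR²γ²/2, where 𝒢(x) = max_{u∈C} ⟨∇f(x), x − u⟩ is the Frank–Wolfe duality gap of f at x over C. -/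
open scoped RealInnerProductSpace

-- line derivative of f through gradient
lemma aux_hasDerivAt_line {n : ℕ} (f : EuclideanSpace ℝ (Fin n) → ℝ)
    (hf : Differentiable ℝ f) (x h : EuclideanSpace ℝ (Fin n)) (t : ℝ) :
    HasDerivAt (fun s : ℝ => f (x + s • h)) ⟪gradient f (x + t • h), h⟫ t := by
  have hc : HasDerivAt (fun s : ℝ => x + s • h) h t := by
    simpa using ((hasDerivAt_id t).smul_const h).const_add x
  have hgrad : HasGradientAt f (gradient f (x + t • h)) (x + t • h) :=
    (hf (x + t • h)).hasGradientAt
  have hfd : HasFDerivAt f (InnerProductSpace.toDual ℝ _ (gradient f (x + t • h)))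
      (x + t • h) := hasGradientAt_iff_hasFDerivAt.mp hgrad
  have := hfd.comp_hasDerivAt t hc
  simpa [InnerProductSpace.toDual_apply_apply, Function.comp_def] using this

-- descent lemma
lemma aux_descent {n : ℕ} (f : EuclideanSpace ℝ (Fin n) → ℝ)
    (hf : Differentiable ℝ f) (L : ℝ) (hL : 0 ≤ L)
    (hflip : ∀ u w, ‖gradient f u - gradient f w‖ ≤ L * ‖u - w‖)
    (x y : EuclideanSpace ℝ (Fin n)) :
    f y ≤ f x + ⟪gradient f x, y - x⟫ + L / 2 * ‖y - x‖ ^ 2 := by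
  set h := y - x with hh
  set ψ : ℝ → ℝ := fun t => f (x + t • h) - t * ⟪gradient f x, h⟫ - L * t ^ 2 / 2 * ‖h‖ ^ 2
    with hψ
  have hderiv : ∀ t : ℝ, HasDerivAt ψ
      (⟪gradient f (x + t • h), h⟫ - ⟪gradient f x, h⟫ - L * t * ‖h‖ ^ 2) t := by
    intro t
    have h1 := aux_hasDerivAt_line f hf x h t
    have h2 : HasDerivAt (fun s : ℝ => s * ⟪gradient f x, h⟫) ⟪gradient f x, h⟫ t := by
      simpa using (hasDerivAt_id t).mul_const ⟪gradient f x, h⟫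
    have h3 : HasDerivAt (fun s : ℝ => L * s ^ 2 / 2 * ‖h‖ ^ 2) (L * t * ‖h‖ ^ 2) t := by
      have : HasDerivAt (fun s : ℝ => s ^ 2) (2 * t) t := by
        simpa using hasDerivAt_pow 2 t
      have := ((this.const_mul L).div_const 2).mul_const (‖h‖ ^ 2)
      rw [show L * t * ‖h‖ ^ 2 = L * (2 * t) / 2 * ‖h‖ ^ 2 by ring]
      exact this
    exact (h1.sub h2).sub h3
  have hanti : AntitoneOn ψ (Set.Icc (0:ℝ) 1) := by
    apply antitoneOn_of_deriv_nonpos (convex_Icc 0 1)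
    · exact (Differentiable.continuous fun t => (hderiv t).differentiableAt).continuousOn
    · exact fun t _ => ((hderiv t).differentiableAt).differentiableWithinAt
    · intro t ht
      rw [(hderiv t).deriv]
      rw [interior_Icc] at ht
      have hineq : ⟪gradient f (x + t • h) - gradient f x, h⟫ ≤ L * t * ‖h‖ ^ 2 := by
        calc ⟪gradient f (x + t • h) - gradient f x, h⟫
            ≤ ‖gradient f (x + t • h) - gradient f x‖ * ‖h‖ := real_inner_le_norm _ _
          _ ≤ (L * ‖(x + t • h) - x‖) * ‖h‖ := by
              gcongr; exact hflip _ _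
          _ = L * t * ‖h‖ ^ 2 := by
              rw [add_sub_cancel_left, norm_smul, Real.norm_eq_abs,
                abs_of_pos ht.1]; ring
      have := inner_sub_left (𝕜 := ℝ) (gradient f (x + t • h)) (gradient f x) h
      linarith [hineq, this]
  have h0 : ψ 1 ≤ ψ 0 := hanti (by norm_num) (by norm_num) zero_le_one
  have e1 : x + (1:ℝ) • h = y := by simp [hh]
  have e0 : x + (0:ℝ) • h = x := by simp
  simp only [hψ, e1, e0, one_pow, mul_one, one_mul] at h0
  nlinarith [h0]

theorem frank_wolfe_single_step_descent_nonconvex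
    (d : ℕ) (hd : 1 ≤ d)
    (C : Set (EuclideanSpace ℝ (Fin d)))
    (hCne : C.Nonempty) (hCcomp : IsCompact C) (hCconv : Convex ℝ C)
    (R : ℝ) (hR : 0 < R) (hdiam : ∀ u ∈ C, ∀ w ∈ C, ‖u - w‖ ≤ R)
    (f : EuclideanSpace ℝ (Fin d) → ℝ)
    (hfdiff : Differentiable ℝ f)
    (L : ℝ) (hL : 0 < L)
    (hflip : ∀ u w, ‖gradient f u - gradient f w‖ ≤ L * ‖u - w‖)
    (x : EuclideanSpace ℝ (Fin d)) (hx : x ∈ C)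
    (dvec : EuclideanSpace ℝ (Fin d))
    (γ : ℝ) (hγ0 : 0 ≤ γ) (hγ1 : γ ≤ 1)
    (v : EuclideanSpace ℝ (Fin d)) (hvC : v ∈ C)
    (hvmin : ∀ s ∈ C, ⟪dvec, v⟫ ≤ ⟪dvec, s⟫) :
    f ((1 - γ) • x + γ • v) ≤
      f x - γ * sSup ((fun u => ⟪gradient f x, x - u⟫) '' C) +
        γ * R * ‖gradient f x - dvec‖ + L * R ^ 2 * γ ^ 2 / 2 := by
  set g := gradient f x with hg
  set φ : EuclideanSpace ℝ (Fin d) → ℝ := fun u => ⟪g, x - u⟫ with hφ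
  -- the sup is attained
  have hcont : Continuous φ := by
    apply Continuous.inner continuous_const
    exact continuous_const.sub continuous_id
  obtain ⟨u₀, hu₀C, hu₀max⟩ := hCcomp.exists_isMaxOn hCne hcont.continuousOn
  have hsup : sSup (φ '' C) = φ u₀ := by
    apply IsGreatest.csSup_eq
    exact ⟨Set.mem_image_of_mem _ hu₀C, by
      rintro _ ⟨u, huC, rfl⟩; exact hu₀max huC⟩
  -- descent lemma applied to y = x + γ • (v - x)
  have hxy : (1 - γ) • x + γ • v = x + γ • (v - x) := by
    module
  have hdes := aux_descent f hfdiff L hL.le hflip x (x + γ • (v - x))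
  have hsub : x + γ • (v - x) - x = γ • (v - x) := by abel
  rw [hxy]
  rw [hsub] at hdes
  -- bound the linear term
  have hinner1 : ⟪g, v - x⟫ ≤ φ u₀ * (-1) + R * ‖g - dvec‖ := by
    have key : ⟪g, v - x⟫ = ⟪g, u₀ - x⟫ + ⟪g - dvec, v - u₀⟫ + ⟪dvec, v - u₀⟫ := by
      simp only [inner_sub_left, inner_sub_right]
      ring
    have h1 : ⟪dvec, v - u₀⟫ ≤ 0 := by
      rw [inner_sub_right]
      linarith [hvmin u₀ hu₀C]
    have h2 : ⟪g - dvec, v - u₀⟫ ≤ R * ‖g - dvec‖ := by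
      calc ⟪g - dvec, v - u₀⟫ ≤ ‖g - dvec‖ * ‖v - u₀‖ := real_inner_le_norm _ _
        _ ≤ ‖g - dvec‖ * R :=
            mul_le_mul_of_nonneg_left (hdiam v hvC u₀ hu₀C) (norm_nonneg _)
        _ = R * ‖g - dvec‖ := mul_comm _ _
    have h3 : ⟪g, u₀ - x⟫ = φ u₀ * (-1) := by
      simp only [hφ]
      rw [show u₀ - x = -(x - u₀) by abel, inner_neg_right]
      ring
    linarith [key, h1, h2, h3]
  have hinner : ⟪g, γ • (v - x)⟫ = γ * ⟪g, v - x⟫ := real_inner_smul_right _ _ _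
  -- bound the quadratic term
  have hquad : L / 2 * ‖γ • (v - x)‖ ^ 2 ≤ L * R ^ 2 * γ ^ 2 / 2 := by
    have hnorm : ‖γ • (v - x)‖ = γ * ‖v - x‖ := by
      rw [norm_smul, Real.norm_eq_abs, abs_of_nonneg hγ0]
    rw [hnorm]
    have hvx : ‖v - x‖ ≤ R := hdiam v hvC x hx
    have ha : ‖v - x‖ ^ 2 ≤ R ^ 2 := by nlinarith [norm_nonneg (v - x)]
    nlinarith [mul_le_mul_of_nonneg_left ha (mul_nonneg hL.le (sq_nonneg γ))]
  rw [hinner] at hdes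
  rw [hsup]
  have := mul_le_mul_of_nonneg_left hinner1 hγ0
  nlinarith [this, hdes, hquad]
end
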